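/- arXiv:1511.06845 — 6 statements merged into one kernel-verified Lean document; each statement's English description precedes it below -/
import Mathlib

section
/- Suppose N̂ = ZᵀAZ is nonsingular, where Z has orthonormal columns spanning null(B). If w solves ZZᵀ A ZZᵀ w = ZZᵀ(f − A x_p), then v := Zᵀw is the unique solution of ZᵀAZ v = Zᵀ(f − A x_p); consequently the recovered component x_n = ZZᵀ w is uniquely determined by A, Z, f, x_p (independent of the choice of solution w). -/
open Matrix

theorem stmt5 {n k : ℕ} (A : Matrix (Fin n) (Fin n) ℝ)
    (Z : Matrix (Fin n) (Fin k) ℝ) (hZ : Zᵀ * Z = 1)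
    (hN : IsUnit (Zᵀ * A * Z)) (f xp : Fin n → ℝ) (w : Fin n → ℝ)
    (hw : (Z * Zᵀ * A * Z * Zᵀ).mulVec w = (Z * Zᵀ).mulVec (f - A.mulVec xp)) :
    (Zᵀ * A * Z).mulVec (Zᵀ.mulVec w) = Zᵀ.mulVec (f - A.mulVec xp) ∧
    (∀ v, (Zᵀ * A * Z).mulVec v = Zᵀ.mulVec (f - A.mulVec xp) → v = Zᵀ.mulVec w) ∧
    (∀ w', (Z * Zᵀ * A * Z * Zᵀ).mulVec w' = (Z * Zᵀ).mulVec (f - A.mulVec xp) →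
      (Z * Zᵀ).mulVec w' = (Z * Zᵀ).mulVec w) := by
  have e1 : Zᵀ * (Z * Zᵀ * A * Z * Zᵀ) = Zᵀ * A * Z * Zᵀ := by
    simp only [← Matrix.mul_assoc]; rw [hZ, Matrix.one_mul]
  have e2 : Zᵀ * (Z * Zᵀ) = Zᵀ := by rw [← Matrix.mul_assoc, hZ, Matrix.one_mul]
  have key : ∀ u : Fin n → ℝ,
      (Z * Zᵀ * A * Z * Zᵀ).mulVec u = (Z * Zᵀ).mulVec (f - A.mulVec xp) →
      (Zᵀ * A * Z).mulVec (Zᵀ.mulVec u) = Zᵀ.mulVec (f - A.mulVec xp) := by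
    intro u hu
    have h := congrArg (Zᵀ.mulVec) hu
    rw [mulVec_mulVec, mulVec_mulVec, e1, e2] at h
    rw [mulVec_mulVec]
    exact h
  have h1 := key w hw
  have uniq : ∀ v, (Zᵀ * A * Z).mulVec v = Zᵀ.mulVec (f - A.mulVec xp) → v = Zᵀ.mulVec w := by
    intro v hv
    have h2 : (Zᵀ * A * Z).mulVec v = (Zᵀ * A * Z).mulVec (Zᵀ.mulVec w) := hv.trans h1.symm
    obtain ⟨N, hNe⟩ := hN.exists_left_inv
    have h3 := congrArg N.mulVec h2
    rwa [mulVec_mulVec, mulVec_mulVec, hNe, Matrix.one_mulVec, Matrix.one_mulVec] at h3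
  refine ⟨h1, uniq, ?_⟩
  intro w' hw'
  have h3 := uniq _ (key w' hw')
  have h4 : Z.mulVec (Zᵀ.mulVec w') = Z.mulVec (Zᵀ.mulVec w) := by rw [h3]
  rwa [mulVec_mulVec, mulVec_mulVec] at h4
end

section
/- Suppose f ∈ range(A) + range(Bᵀ). Let x_p be the minimum-norm least-squares solution of Bx = g (so x_p ∈ range(Bᵀ)), and let w be the minimum-norm solution of ΠAΠ w = Π(f − A x_p), where Π is the orthogonal projector onto null(B). Then x = x_p + Πw minimizes ‖x‖ among all vectors of the form x_p + x_n with x_n ∈ null(B) satisfying ZᵀA(x_p + x_n) = Zᵀf, and all such x minimize ‖g − Bx‖. -/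
open Matrix

noncomputable def euclNorm {n : ℕ} (v : Fin n → ℝ) : ℝ := Real.sqrt (v ⬝ᵥ v)

private lemma dp_self_nonneg {n : ℕ} (v : Fin n → ℝ) : 0 ≤ v ⬝ᵥ v :=
  Finset.sum_nonneg fun i _ => mul_self_nonneg (v i)

private lemma euclNorm_mono {n : ℕ} {a b : Fin n → ℝ} (h : a ⬝ᵥ a ≤ b ⬝ᵥ b) :
    euclNorm a ≤ euclNorm b := Real.sqrt_le_sqrt h

private lemma dp_le_of_euclNorm_le {n : ℕ} {a b : Fin n → ℝ}
    (h : euclNorm a ≤ euclNorm b) : a ⬝ᵥ a ≤ b ⬝ᵥ b := by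
  unfold euclNorm at h
  have ha := dp_self_nonneg a
  have hb := dp_self_nonneg b
  nlinarith [Real.sq_sqrt ha, Real.sq_sqrt hb, Real.sqrt_nonneg (a ⬝ᵥ a),
    Real.sqrt_nonneg (b ⬝ᵥ b)]

theorem stmt8 {m n k : ℕ} (A : Matrix (Fin n) (Fin n) ℝ)
    (B : Matrix (Fin m) (Fin n) ℝ) (f : Fin n → ℝ) (g : Fin m → ℝ)
    (Z : Matrix (Fin n) (Fin k) ℝ) (hZ : Zᵀ * Z = 1)
    (hZr : LinearMap.range Z.mulVecLin = LinearMap.ker B.mulVecLin)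
    (hf : ∃ u v, f = A.mulVec u + Bᵀ.mulVec v)
    (xp : Fin n → ℝ)
    (hxp_range : xp ∈ LinearMap.range Bᵀ.mulVecLin)
    (hxp_ls : ∀ u, euclNorm (g - B.mulVec xp) ≤ euclNorm (g - B.mulVec u))
    (hxp_min : ∀ u, euclNorm (g - B.mulVec u) = euclNorm (g - B.mulVec xp) →
      euclNorm xp ≤ euclNorm u)
    (w : Fin n → ℝ)
    (hw : ((Z * Zᵀ) * A * (Z * Zᵀ)).mulVec w = (Z * Zᵀ).mulVec (f - A.mulVec xp))
    (hw_min : ∀ w', ((Z * Zᵀ) * A * (Z * Zᵀ)).mulVec w'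
        = (Z * Zᵀ).mulVec (f - A.mulVec xp) → euclNorm w ≤ euclNorm w') :
    Zᵀ.mulVec (A.mulVec (xp + (Z * Zᵀ).mulVec w)) = Zᵀ.mulVec f ∧
    (∀ xn, B.mulVec xn = 0 →
      Zᵀ.mulVec (A.mulVec (xp + xn)) = Zᵀ.mulVec f →
      euclNorm (xp + (Z * Zᵀ).mulVec w) ≤ euclNorm (xp + xn) ∧
      ∀ u, euclNorm (g - B.mulVec (xp + xn)) ≤ euclNorm (g - B.mulVec u)) := by
  set P : Matrix (Fin n) (Fin n) ℝ := Z * Zᵀ with hPdef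
  -- B * Z = 0
  have hBZ : B * Z = 0 := by
    ext i j
    have hcol : Z.mulVec (Pi.single j 1) ∈ LinearMap.ker B.mulVecLin := by
      rw [← hZr]; exact ⟨Pi.single j 1, rfl⟩
    have h0 : B.mulVec (Z.mulVec (Pi.single j 1)) = 0 := hcol
    rw [Matrix.mulVec_mulVec, Matrix.mulVec_single] at h0
    have := congrFun h0 i
    simpa using this
  -- Zᵀ xp = 0
  obtain ⟨v, hv⟩ := hxp_range
  have hZxp : Zᵀ.mulVec xp = 0 := by
    rw [← hv]
    show Zᵀ.mulVec (Bᵀ.mulVec v) = 0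
    rw [Matrix.mulVec_mulVec, ← Matrix.transpose_mul, hBZ]
    simp
  -- P xp = 0
  have hPxp : P.mulVec xp = 0 := by
    rw [hPdef, ← Matrix.mulVec_mulVec, hZxp]
    simp
  have hZZZ : Z * Zᵀ * Z = Z := by
    rw [Matrix.mul_assoc, hZ, Matrix.mul_one]
  -- P idempotent
  have hP2 : P * P = P := by
    rw [hPdef, ← Matrix.mul_assoc, hZZZ]
  -- Zᵀ * P = Zᵀ
  have hZP : Zᵀ * P = Zᵀ := by
    rw [hPdef, ← Matrix.mul_assoc, hZ, Matrix.one_mul]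
  have hZPv : ∀ x : Fin n → ℝ, Zᵀ.mulVec (P.mulVec x) = Zᵀ.mulVec x := by
    intro x; rw [Matrix.mulVec_mulVec, hZP]
  have hPv : ∀ x : Fin n → ℝ, P.mulVec x = Z.mulVec (Zᵀ.mulVec x) := by
    intro x; rw [Matrix.mulVec_mulVec, hPdef]
  -- symmetry of P for dot products
  have hPsym : ∀ a b : Fin n → ℝ, (P.mulVec a) ⬝ᵥ b = a ⬝ᵥ (P.mulVec b) := by
    intro a b
    rw [Matrix.dotProduct_mulVec, ← Matrix.vecMul_transpose]
    rw [hPdef, Matrix.transpose_mul, Matrix.transpose_transpose]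
  -- Part 1
  have part1 : Zᵀ.mulVec (A.mulVec (xp + P.mulVec w)) = Zᵀ.mulVec f := by
    have h1 := congrArg (fun t => Zᵀ.mulVec t) hw
    simp only [← Matrix.mulVec_mulVec] at h1
    rw [hZPv, hZPv] at h1
    rw [Matrix.mulVec_add A, Matrix.mulVec_add Zᵀ, h1, Matrix.mulVec_sub]
    abel
  refine ⟨part1, fun xn hxn hxn2 => ?_⟩
  -- xn = Z y, so P xn = xn
  have hxnr : xn ∈ LinearMap.range Z.mulVecLin := by rw [hZr]; exact hxn
  obtain ⟨y, hy⟩ := hxnr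
  have hPxn : P.mulVec xn = xn := by
    rw [← hy]
    show P.mulVec (Z.mulVec y) = Z.mulVec y
    rw [Matrix.mulVec_mulVec, hPdef, hZZZ]
  -- xn solves the projected system
  have hxnsol : (P * A * P).mulVec xn = P.mulVec (f - A.mulVec xp) := by
    have h2 := congrArg (fun t => Z.mulVec t) hxn2
    have h3 : P.mulVec (A.mulVec (xp + xn)) = P.mulVec f := by
      rw [hPv, hPv]; exact h2
    rw [Matrix.mulVec_add A, Matrix.mulVec_add P] at h3
    have h3' : P.mulVec (A.mulVec xn) = P.mulVec f - P.mulVec (A.mulVec xp) := by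
      rw [eq_sub_iff_add_eq, add_comm]; exact h3
    simp only [← Matrix.mulVec_mulVec]
    rw [hPxn, Matrix.mulVec_sub]
    exact h3'
  have hwxn : euclNorm w ≤ euclNorm xn := hw_min xn hxnsol
  -- ‖Pw‖ ≤ ‖w‖
  have hPw : (P.mulVec w) ⬝ᵥ (P.mulVec w) ≤ w ⬝ᵥ w := by
    have hid : (P.mulVec w) ⬝ᵥ (P.mulVec w) = w ⬝ᵥ (P.mulVec w) := by
      rw [hPsym, Matrix.mulVec_mulVec, hP2]
    have hx : (P.mulVec w) ⬝ᵥ (w - P.mulVec w) = 0 := by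
      rw [dotProduct_sub, hid, hPsym w w, sub_self]
    have hx' : (w - P.mulVec w) ⬝ᵥ (P.mulVec w) = 0 := by
      rw [dotProduct_comm]; exact hx
    have hsplit : w = P.mulVec w + (w - P.mulVec w) := by abel
    have hpyth : w ⬝ᵥ w = (P.mulVec w) ⬝ᵥ (P.mulVec w)
        + (w - P.mulVec w) ⬝ᵥ (w - P.mulVec w) := by
      calc w ⬝ᵥ w = (P.mulVec w + (w - P.mulVec w)) ⬝ᵥ (P.mulVec w + (w - P.mulVec w)) := by
            rw [← hsplit]
        _ = (P.mulVec w) ⬝ᵥ (P.mulVec w) + (w - P.mulVec w) ⬝ᵥ (w - P.mulVec w) := by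
            rw [add_dotProduct, dotProduct_add, dotProduct_add, hx, hx']
            ring
    linarith [dp_self_nonneg (w - P.mulVec w)]
  -- orthogonality of xp to range of P
  have horth : ∀ a : Fin n → ℝ, xp ⬝ᵥ (P.mulVec a) = 0 := by
    intro a
    rw [← hPsym, hPxp]
    simp
  have hxpxn : xp ⬝ᵥ xn = 0 := by rw [← hPxn]; exact horth xn
  -- Pythagoras
  have hpyth2 : ∀ u : Fin n → ℝ, xp ⬝ᵥ u = 0 →
      (xp + u) ⬝ᵥ (xp + u) = xp ⬝ᵥ xp + u ⬝ᵥ u := by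
    intro u hu
    rw [add_dotProduct, dotProduct_add, dotProduct_add, hu,
      dotProduct_comm u xp, hu]
    ring
  constructor
  · apply euclNorm_mono
    rw [hpyth2 _ (horth w), hpyth2 _ hxpxn]
    have h1 : (P.mulVec w) ⬝ᵥ (P.mulVec w) ≤ xn ⬝ᵥ xn :=
      le_trans hPw (dp_le_of_euclNorm_le hwxn)
    linarith
  · intro u
    have hBe : B.mulVec (xp + xn) = B.mulVec xp := by
      rw [Matrix.mulVec_add, hxn]; simp
    rw [hBe]
    exact hxp_ls u
end

section
/- Assume ZᵀGZ is nonsingular, where Z has orthonormal columns, and let P_G = Z(ZᵀGZ)⁻¹Zᵀ. Then for any w, the equation P_G · (ZZᵀAZZᵀ) w = P_G · ZZᵀ b holds if and only if (ZᵀGZ)⁻¹ ZᵀAZ (Zᵀw) = (ZᵀGZ)⁻¹ Zᵀ b; i.e., left-preconditioning the projected null-space equation by P_G is equivalent to left-preconditioning the null-space equation by ZᵀGZ. -/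
open Matrix

theorem stmt10 {n k : ℕ} (A G : Matrix (Fin n) (Fin n) ℝ)
    (Z : Matrix (Fin n) (Fin k) ℝ) (hZ : Zᵀ * Z = 1)
    (hG : IsUnit (Zᵀ * G * Z)) (b : Fin n → ℝ) :
    ∀ w : Fin n → ℝ,
      ((Z * (Zᵀ * G * Z)⁻¹ * Zᵀ) * (Z * Zᵀ * A * Z * Zᵀ)).mulVec w
          = ((Z * (Zᵀ * G * Z)⁻¹ * Zᵀ) * (Z * Zᵀ)).mulVec b ↔
      ((Zᵀ * G * Z)⁻¹ * (Zᵀ * A * Z)).mulVec (Zᵀ.mulVec w)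
          = ((Zᵀ * G * Z)⁻¹ * Zᵀ).mulVec b := by
  intro w
  set M := (Zᵀ * G * Z)⁻¹ with hM
  have key : ∀ (m : ℕ) (X : Matrix (Fin k) (Fin m) ℝ), Zᵀ * (Z * X) = X := by
    intro m X
    rw [← Matrix.mul_assoc, hZ, Matrix.one_mul]
  have hA : (Z * M * Zᵀ) * (Z * Zᵀ * A * Z * Zᵀ)
      = Z * (M * (Zᵀ * A * Z)) * Zᵀ := by
    simp only [Matrix.mul_assoc]
    rw [key]
  have hB : (Z * M * Zᵀ) * (Z * Zᵀ) = Z * (M * Zᵀ) := by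
    simp only [Matrix.mul_assoc]
    rw [key]
  rw [hA, hB]
  have hm1 : (Z * (M * (Zᵀ * A * Z)) * Zᵀ).mulVec w
      = Z.mulVec ((M * (Zᵀ * A * Z)).mulVec (Zᵀ.mulVec w)) := by
    rw [← Matrix.mulVec_mulVec, ← Matrix.mulVec_mulVec]
  have hm2 : (Z * (M * Zᵀ)).mulVec b = Z.mulVec ((M * Zᵀ).mulVec b) := by
    rw [← Matrix.mulVec_mulVec]
  rw [hm1, hm2]
  constructor
  · intro h
    have := congrArg Zᵀ.mulVec h
    simpa [Matrix.mulVec_mulVec, key] using this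
  · intro h
    rw [h]
end

section
/- Assume ZᵀGZ is nonsingular, where Z has orthonormal columns. Let N = ZZᵀAZZᵀ and P_G = Z(ZᵀGZ)⁻¹Zᵀ. Then null(P_G N) = null(N). -/
open Matrix

theorem stmt11 {n k : ℕ} (A G : Matrix (Fin n) (Fin n) ℝ)
    (Z : Matrix (Fin n) (Fin k) ℝ) (hZ : Zᵀ * Z = 1)
    (hG : IsUnit (Zᵀ * G * Z)) :
    LinearMap.ker ((Z * (Zᵀ * G * Z)⁻¹ * Zᵀ) * (Z * Zᵀ * A * Z * Zᵀ)).mulVecLin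
      = LinearMap.ker (Z * Zᵀ * A * Z * Zᵀ).mulVecLin := by
  have hdet : IsUnit (Zᵀ * G * Z).det := (Matrix.isUnit_iff_isUnit_det _).mp hG
  have hBinv : (Zᵀ * G * Z) * (Zᵀ * G * Z)⁻¹ = 1 := Matrix.mul_nonsing_inv _ hdet
  set B := Zᵀ * G * Z with hB
  set C := B⁻¹ * (Zᵀ * A * Z * Zᵀ) with hC
  have hPN : (Z * B⁻¹ * Zᵀ) * (Z * Zᵀ * A * Z * Zᵀ) = Z * C := by
    have h0 : Zᵀ * (Z * Zᵀ) = Zᵀ := by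
      rw [← Matrix.mul_assoc, hZ, Matrix.one_mul]
    calc (Z * B⁻¹ * Zᵀ) * (Z * Zᵀ * A * Z * Zᵀ)
        = Z * B⁻¹ * (Zᵀ * (Z * Zᵀ) * A * Z * Zᵀ) := by
          simp only [Matrix.mul_assoc]
      _ = Z * C := by
          rw [h0, hC]; simp only [Matrix.mul_assoc]
  ext x
  simp only [LinearMap.mem_ker, Matrix.mulVecLin_apply]
  constructor
  · intro h
    rw [hPN] at h
    have h2 : C.mulVec x = 0 := by
      calc C.mulVec x = ((Zᵀ * Z) * C).mulVec x := by rw [hZ, Matrix.one_mul]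
        _ = Zᵀ.mulVec ((Z * C).mulVec x) := by
            rw [Matrix.mulVec_mulVec, Matrix.mul_assoc]
        _ = 0 := by rw [h, Matrix.mulVec_zero]
    have h4 : (Zᵀ * A * Z * Zᵀ).mulVec x = 0 := by
      calc (Zᵀ * A * Z * Zᵀ).mulVec x
          = (B * C).mulVec x := by rw [hC, ← Matrix.mul_assoc, hBinv, Matrix.one_mul]
        _ = B.mulVec (C.mulVec x) := (Matrix.mulVec_mulVec _ _ _).symm
        _ = 0 := by rw [h2, Matrix.mulVec_zero]
    have e2 : (Z * Zᵀ * A * Z * Zᵀ) = Z * (Zᵀ * A * Z * Zᵀ) := by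
      simp only [Matrix.mul_assoc]
    rw [e2, ← Matrix.mulVec_mulVec, h4, Matrix.mulVec_zero]
  · intro h
    rw [← Matrix.mulVec_mulVec, h, Matrix.mulVec_zero]
end

section
/- Suppose s and t solve the system G s + U t = b, Uᵀ s = 0, where G is nonsingular, U has orthonormal columns, Z has orthonormal columns with range(Z) = null(Uᵀ), and ZᵀGZ is invertible. Then s = Z(ZᵀGZ)⁻¹Zᵀ b. -/
open Matrix

theorem stmt13 {n q : ℕ} (G : Matrix (Fin n) (Fin n) ℝ) (hGinv : IsUnit G)
    (U : Matrix (Fin n) (Fin q) ℝ) (hU : Uᵀ * U = 1)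
    (Z : Matrix (Fin n) (Fin (n - q)) ℝ) (hZ : Zᵀ * Z = 1)
    (hZr : LinearMap.range Z.mulVecLin = LinearMap.ker Uᵀ.mulVecLin)
    (hZGZ : IsUnit (Zᵀ * G * Z))
    (b : Fin n → ℝ) (s : Fin n → ℝ) (t : Fin q → ℝ)
    (h1 : G.mulVec s + U.mulVec t = b)
    (h2 : Uᵀ.mulVec s = 0) :
    s = (Z * (Zᵀ * G * Z)⁻¹ * Zᵀ).mulVec b := by
  -- s ∈ range Z
  have hs : ∃ w, Z.mulVec w = s := by
    have : s ∈ LinearMap.range Z.mulVecLin := by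
      rw [hZr]; exact h2
    exact this
  obtain ⟨w, hw⟩ := hs
  -- Uᵀ * Z = 0
  have hUZ : Uᵀ * Z = 0 := by
    ext i j
    have : Uᵀ.mulVec (Z.mulVec (Pi.single j 1)) = 0 := by
      have : Z.mulVec (Pi.single j 1) ∈ LinearMap.ker Uᵀ.mulVecLin := by
        rw [← hZr]; exact ⟨Pi.single j 1, rfl⟩
      exact this
    have h := congrFun this i
    rw [Matrix.mulVec_mulVec] at h
    simpa [Matrix.mulVec_mulVec, Matrix.mulVec_single] using h
  have hZU : Zᵀ * U = 0 := by
    have := congrArg Matrix.transpose hUZ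
    simpa using this
  -- multiply h1 by Zᵀ
  have h3 : (Zᵀ * G * Z).mulVec w = Zᵀ.mulVec b := by
    have := congrArg (Zᵀ.mulVec) h1
    rw [Matrix.mulVec_add] at this
    rw [Matrix.mulVec_mulVec, ← Matrix.mulVec_mulVec, Matrix.mulVec_mulVec] at this
    rw [Matrix.mulVec_mulVec, hZU] at this
    simp only [Matrix.zero_mulVec, add_zero] at this
    rw [← hw, Matrix.mulVec_mulVec] at this
    exact this
  have hdet : IsUnit (Zᵀ * G * Z).det := (Matrix.isUnit_iff_isUnit_det _).mp hZGZ
  calc s = Z.mulVec w := hw.symm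
    _ = Z.mulVec ((Zᵀ * G * Z)⁻¹.mulVec ((Zᵀ * G * Z).mulVec w)) := by
        simp only [Matrix.mulVec_mulVec]
        rw [Matrix.nonsing_inv_mul _ hdet, Matrix.mul_one]
    _ = (Z * (Zᵀ * G * Z)⁻¹ * Zᵀ).mulVec b := by
        rw [h3, Matrix.mulVec_mulVec, Matrix.mulVec_mulVec, Matrix.mul_assoc]
end

section
/- Let Π be the orthogonal projector onto null(B) and suppose w solves ΠAΠ w = Π(f − A x_p). Then x_n := Πw satisfies B x_n = 0 exactly, and Zᵀ(A(x_p + x_n) − f) = 0 where Z has orthonormal columns spanning null(B). -/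
open Matrix

theorem stmt19 {m n k : ℕ} (A : Matrix (Fin n) (Fin n) ℝ)
    (B : Matrix (Fin m) (Fin n) ℝ) (f xp : Fin n → ℝ)
    (Z : Matrix (Fin n) (Fin k) ℝ) (hZ : Zᵀ * Z = 1)
    (hZr : LinearMap.range Z.mulVecLin = LinearMap.ker B.mulVecLin)
    (w : Fin n → ℝ)
    (hw : ((Z * Zᵀ) * A * (Z * Zᵀ)).mulVec w
        = (Z * Zᵀ).mulVec (f - A.mulVec xp)) :
    B.mulVec ((Z * Zᵀ).mulVec w) = 0 ∧
    Zᵀ.mulVec (A.mulVec (xp + (Z * Zᵀ).mulVec w) - f) = 0 := by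
  constructor
  · have hmem : (Z * Zᵀ).mulVec w ∈ LinearMap.range Z.mulVecLin := by
      refine ⟨Zᵀ.mulVec w, ?_⟩
      simp [mulVecLin_apply, mulVec_mulVec]
    rw [hZr] at hmem
    simpa [mulVecLin_apply] using hmem
  · have h2 := congrArg (Zᵀ.mulVec ·) hw
    simp only [← mulVec_mulVec] at h2 ⊢
    have hproj : ∀ v : Fin k → ℝ, Zᵀ.mulVec (Z.mulVec v) = v := by
      intro v
      rw [mulVec_mulVec, hZ, one_mulVec]
    rw [hproj, hproj] at h2
    rw [mulVec_sub] at h2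
    rw [mulVec_sub, mulVec_add, mulVec_add, h2]
    abel
end
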